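/- The point (x₁,y₁) = (√(Φ/(4Ω₀+Φ)), 0), (x₂,y₂) = (-√(Φ/(4Ω₀+Φ)), 0) is an equilibrium of the vortex dipole system, i.e., the right-hand sides of the equations of motion vanish at this configuration. -/

import Mathlib

/-- the configuration `z₁ = (√(Φ/(4Ω₀+Φ)), 0)`, `z₂ = -z₁` is an
equilibrium of the vortex dipole system: both right-hand sides vanish there. -/
theorem stationary_equilibrium_exists
    (Ω₀ Φ : ℝ) (hΩ₀ : 0 < Ω₀) (hΦ : 0 < Φ)
    (z₁ z₂ : ℂ)
    (hz₁ : z₁ = ((Real.sqrt (Φ / (4 * Ω₀ + Φ)) : ℝ) : ℂ))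
    (hz₂ : z₂ = -((Real.sqrt (Φ / (4 * Ω₀ + Φ)) : ℝ) : ℂ)) :
    -((Ω₀ / (1 - ‖z₁‖ ^ 2) : ℝ) : ℂ) * z₁
        + ((Φ / (2 * ‖z₁ - z₂‖ ^ 2) : ℝ) : ℂ) * (z₁ - z₂) = 0 ∧
      ((Ω₀ / (1 - ‖z₂‖ ^ 2) : ℝ) : ℂ) * z₂
        - ((Φ / (2 * ‖z₁ - z₂‖ ^ 2) : ℝ) : ℂ) * (z₂ - z₁) = 0 := by
  set s : ℝ := Real.sqrt (Φ / (4 * Ω₀ + Φ)) with hs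
  have hd : 0 < 4 * Ω₀ + Φ := by linarith
  have hs0 : 0 ≤ s := Real.sqrt_nonneg _
  have hs2 : s ^ 2 = Φ / (4 * Ω₀ + Φ) := Real.sq_sqrt (by positivity)
  have hn1 : ‖z₁‖ = s := by rw [hz₁, Complex.norm_real]; exact Real.norm_of_nonneg hs0
  have hn2 : ‖z₂‖ = s := by
    rw [hz₂, norm_neg, Complex.norm_real]; exact Real.norm_of_nonneg hs0
  have hsub : z₁ - z₂ = ((2 * s : ℝ) : ℂ) := by rw [hz₁, hz₂]; push_cast; ring
  have hn12 : ‖z₁ - z₂‖ = 2 * s := by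
    rw [hsub, Complex.norm_real]; exact Real.norm_of_nonneg (by positivity)
  have h1 : 1 - s ^ 2 = 4 * Ω₀ / (4 * Ω₀ + Φ) := by
    rw [hs2]; field_simp; ring
  have hA : Ω₀ / (1 - s ^ 2) = (4 * Ω₀ + Φ) / 4 := by
    rw [h1]; field_simp
  have hs2pos : 0 < s ^ 2 := by rw [hs2]; positivity
  have hB : Φ / (2 * (2 * s) ^ 2) = (4 * Ω₀ + Φ) / 8 := by
    have : (2 * s) ^ 2 = 4 * (Φ / (4 * Ω₀ + Φ)) := by rw [← hs2]; ring
    rw [this]; field_simp; ring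
  rw [hn1, hn2, hn12, hz₁, hz₂, hA, hB]
  constructor <;> · push_cast; ring
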